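/- Every expression A ∈ L(n) with n ≥ 2 can be written in exactly one way as a substitution A = p(B_1,…,B_m), where m ≥ 2, p ∈ P(m) is a prime expression, B_i ∈ L(n_i) with n_1 + ⋯ + n_m = n, and p(B_1,…,B_m) denotes the expression obtained from p by replacing its i-th symbol (the symbol of p carrying index i) by the expression B_i with all of B_i's indices shifted upward by n_1 + ⋯ + n_{i-1}. -/

import Mathlib

/-- Formal expressions: complete binary bracketings with leaves labeled by natural numbers. -/
inductive BTree : Type
  | leaf : ℕ → BTree
  | node : BTree → BTree → BTree
  deriving DecidableEq

namespace BTree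

/-- The list of leaf labels, read from left to right. -/
def leaves : BTree → List ℕ
  | leaf i => [i]
  | node l r => leaves l ++ leaves r

/-- In every bracket `[u,v]`, the minimum index occurs inside `u`
and the maximum index occurs inside `v`. -/
def valid : BTree → Prop
  | leaf _ => True
  | node l r => valid l ∧ valid r ∧
      (∃ a ∈ leaves l, ∀ i ∈ leaves l ++ leaves r, a ≤ i) ∧
      (∃ b ∈ leaves r, ∀ i ∈ leaves l ++ leaves r, i ≤ b)

/-- Membership in `L n`: the leaf labels are exactly `1, …, n`, each occurring
exactly once (in any order), and the min/max condition holds at every bracket. -/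
def memL (n : ℕ) (t : BTree) : Prop :=
  (leaves t).Perm (List.range' 1 n) ∧ valid t

end BTree
namespace BTree

/-- Subexpression (subtree) relation. -/
inductive IsSubtree : BTree → BTree → Prop
  | refl (t : BTree) : IsSubtree t t
  | left {s l r : BTree} : IsSubtree s l → IsSubtree s (node l r)
  | right {s l r : BTree} : IsSubtree s r → IsSubtree s (node l r)

/-- A bracket is connected if its set of indices is an interval of consecutive integers. -/
def connected (t : BTree) : Prop := ∃ a b : ℕ, (leaves t).toFinset = Finset.Icc a b

/-- Membership in `P n`: an element of `L n` is prime if the only connected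
bracket it contains is the outermost one. -/
def memP (n : ℕ) (t : BTree) : Prop :=
  memL n t ∧ ∀ s l r : BTree, IsSubtree s t → s = node l r → s ≠ t → ¬ connected s

end BTree

namespace BTree

/-- Shift all leaf labels upward by `s`. -/
def shift (s : ℕ) : BTree → BTree
  | leaf i => leaf (i + s)
  | node l r => node (shift s l) (shift s r)

/-- Replace each leaf labeled `i` by the tree `f i`. -/
def graft (f : ℕ → BTree) : BTree → BTree
  | leaf i => f i
  | node l r => node (graft f l) (graft f r)

/-- Number of symbols (leaves). -/
def numLeaves (t : BTree) : ℕ := (leaves t).length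

/-- The substitution `p(B_1, …, B_m)`: the symbol of `p` carrying index `i`
is replaced by `B_i` with all of its indices shifted upward by
`n_1 + ⋯ + n_{i-1}`, where `n_j` is the number of symbols of `B_j`. -/
def substitute (p : BTree) (Bs : List BTree) : BTree :=
  graft (fun i =>
    shift (((Bs.take (i - 1)).map numLeaves).sum) (Bs.getD (i - 1) (leaf 0))) p

end BTree
namespace BTree

theorem leaves_ne_nil : ∀ t : BTree, leaves t ≠ []
  | leaf i => by simp [leaves]
  | node l r => by simp [leaves]; intro h _; exact leaves_ne_nil l h

theorem numLeaves_pos (t : BTree) : 0 < numLeaves t := by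
  simp [numLeaves, List.length_pos_iff, leaves_ne_nil]

/-- Minimum leaf label. -/
def lmin : BTree → ℕ
  | leaf i => i
  | node l r => min (lmin l) (lmin r)

/-- Maximum leaf label. -/
def lmax : BTree → ℕ
  | leaf i => i
  | node l r => max (lmax l) (lmax r)

theorem lmin_mem : ∀ t : BTree, lmin t ∈ leaves t
  | leaf i => by simp [lmin, leaves]
  | node l r => by
      rcases min_cases (lmin l) (lmin r) with ⟨h, _⟩ | ⟨h, _⟩ <;>
        simp [lmin, leaves, h, lmin_mem l, lmin_mem r]

theorem lmax_mem : ∀ t : BTree, lmax t ∈ leaves t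
  | leaf i => by simp [lmax, leaves]
  | node l r => by
      rcases max_cases (lmax l) (lmax r) with ⟨h, _⟩ | ⟨h, _⟩ <;>
        simp [lmax, leaves, h, lmax_mem l, lmax_mem r]

theorem lmin_le : ∀ t : BTree, ∀ i ∈ leaves t, lmin t ≤ i
  | leaf j => by simp [lmin, leaves]
  | node l r => by
      intro i hi
      simp only [leaves, List.mem_append] at hi
      rcases hi with hi | hi
      · exact le_trans (min_le_left _ _) (lmin_le l i hi)
      · exact le_trans (min_le_right _ _) (lmin_le r i hi)

theorem le_lmax : ∀ t : BTree, ∀ i ∈ leaves t, i ≤ lmax t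
  | leaf j => by simp [lmax, leaves]
  | node l r => by
      intro i hi
      simp only [leaves, List.mem_append] at hi
      rcases hi with hi | hi
      · exact le_trans (le_lmax l i hi) (le_max_left _ _)
      · exact le_trans (le_lmax r i hi) (le_max_right _ _)

theorem lmin_le_lmax (t : BTree) : lmin t ≤ lmax t :=
  le_lmax t _ (lmin_mem t)

theorem connected_iff (t : BTree) :
    connected t ↔ (leaves t).toFinset = Finset.Icc (lmin t) (lmax t) := by
  constructor
  · rintro ⟨a, b, h⟩
    have hmin : lmin t ∈ Finset.Icc a b := by rw [← h]; simp [lmin_mem]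
    have hmax : lmax t ∈ Finset.Icc a b := by rw [← h]; simp [lmax_mem]
    simp only [Finset.mem_Icc] at hmin hmax
    have ha : a ∈ (leaves t).toFinset := by
      rw [h]; simp [Finset.mem_Icc]; omega
    have hb : b ∈ (leaves t).toFinset := by
      rw [h]; simp [Finset.mem_Icc]; omega
    simp only [List.mem_toFinset] at ha hb
    have h1 := lmin_le t a ha
    have h2 := le_lmax t b hb
    have ha' : a = lmin t := le_antisymm hmin.1 (by omega)
    have hb' : b = lmax t := le_antisymm (by omega) hmax.2
    subst ha'; subst hb'; exact h
  · intro h; exact ⟨_, _, h⟩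

instance : DecidablePred connected := fun t =>
  decidable_of_iff _ (connected_iff t).symm

theorem connected_leaf (i : ℕ) : connected (leaf i) :=
  ⟨i, i, by simp [leaves]⟩

theorem IsSubtree.trans {s t u : BTree} (h1 : IsSubtree s t) (h2 : IsSubtree t u) :
    IsSubtree s u := by
  induction h2 with
  | refl => exact h1
  | left _ ih => exact .left ih
  | right _ ih => exact .right ih

theorem IsSubtree.sublist {s t : BTree} (h : IsSubtree s t) :
    (leaves s).Sublist (leaves t) := by
  induction h with
  | refl => exact List.Sublist.refl _
  | left _ ih => exact ih.trans (List.sublist_append_left _ _)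
  | right _ ih => exact ih.trans (List.sublist_append_right _ _)

theorem IsSubtree.subset {s t : BTree} (h : IsSubtree s t) :
    ∀ i ∈ leaves s, i ∈ leaves t := fun _ hi => h.sublist.mem hi

theorem IsSubtree.nodup {s t : BTree} (h : IsSubtree s t)
    (hn : (leaves t).Nodup) : (leaves s).Nodup := hn.sublist h.sublist

theorem IsSubtree.valid {s t : BTree} (h : IsSubtree s t) (hv : valid t) : valid s := by
  induction h with
  | refl => exact hv
  | left _ ih => exact ih hv.1
  | right _ ih => exact ih hv.2.1

theorem IsSubtree.eq_or_lt {s t : BTree} (h : IsSubtree s t) :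
    s = t ∨ numLeaves s < numLeaves t := by
  induction h with
  | refl => exact Or.inl rfl
  | left h' ih =>
      rename_i l r
      right
      have h1 : numLeaves s ≤ numLeaves l := by
        rcases ih with rfl | hlt; exacts [le_rfl, hlt.le]
      have h2 := numLeaves_pos r
      simp only [numLeaves, leaves, List.length_append] at h1 h2 ⊢
      omega
  | right h' ih =>
      rename_i l r
      right
      have h1 : numLeaves s ≤ numLeaves r := by
        rcases ih with rfl | hlt; exacts [le_rfl, hlt.le]
      have h2 := numLeaves_pos l
      simp only [numLeaves, leaves, List.length_append] at h1 h2 ⊢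
      omega

theorem IsSubtree.antisymm {s t : BTree} (h1 : IsSubtree s t) (h2 : IsSubtree t s) :
    s = t := by
  rcases h1.eq_or_lt with rfl | h1 ; · rfl
  rcases h2.eq_or_lt with rfl | h2 ; · rfl
  omega

end BTree
namespace BTree

/-- Shift all leaf labels downward by `s`. -/
def unshift (s : ℕ) : BTree → BTree
  | leaf i => leaf (i - s)
  | node l r => node (unshift s l) (unshift s r)

theorem leaves_shift (s : ℕ) : ∀ t, leaves (shift s t) = (leaves t).map (· + s)
  | leaf i => rfl
  | node l r => by simp [leaves, shift, leaves_shift s l, leaves_shift s r]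

theorem leaves_unshift (s : ℕ) : ∀ t, leaves (unshift s t) = (leaves t).map (· - s)
  | leaf i => rfl
  | node l r => by simp [leaves, unshift, leaves_unshift s l, leaves_unshift s r]

theorem numLeaves_shift (s : ℕ) (t : BTree) : numLeaves (shift s t) = numLeaves t := by
  simp [numLeaves, leaves_shift]

theorem numLeaves_unshift (s : ℕ) (t : BTree) : numLeaves (unshift s t) = numLeaves t := by
  simp [numLeaves, leaves_unshift]

theorem unshift_shift (s : ℕ) : ∀ t, unshift s (shift s t) = t
  | leaf i => by simp [shift, unshift]
  | node l r => by simp [shift, unshift, unshift_shift s l, unshift_shift s r]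

theorem shift_unshift (s : ℕ) : ∀ t, (∀ i ∈ leaves t, s ≤ i) → shift s (unshift s t) = t
  | leaf i => by simp [shift, unshift, leaves]; omega
  | node l r => by
      intro h
      simp only [leaves, List.mem_append] at h
      simp [shift, unshift, shift_unshift s l (fun i hi => h i (Or.inl hi)),
        shift_unshift s r (fun i hi => h i (Or.inr hi))]

theorem valid_shift (s : ℕ) : ∀ t, valid t → valid (shift s t)
  | leaf i => fun _ => trivial
  | node l r => by
      rintro ⟨h1, h2, ⟨a, ha, hamin⟩, ⟨b, hb, hbmax⟩⟩
      refine ⟨valid_shift s l h1, valid_shift s r h2, ⟨a + s, ?_, ?_⟩, ⟨b + s, ?_, ?_⟩⟩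
      · simp only [leaves_shift, List.mem_map]; exact ⟨a, ha, rfl⟩
      · intro i hi
        simp only [leaves_shift, ← List.map_append, List.mem_map] at hi
        obtain ⟨j, hj, rfl⟩ := hi
        exact Nat.add_le_add_right (hamin j hj) s
      · simp only [leaves_shift, List.mem_map]; exact ⟨b, hb, rfl⟩
      · intro i hi
        simp only [leaves_shift, ← List.map_append, List.mem_map] at hi
        obtain ⟨j, hj, rfl⟩ := hi
        exact Nat.add_le_add_right (hbmax j hj) s

theorem valid_unshift (s : ℕ) : ∀ t, valid t → valid (unshift s t)
  | leaf i => fun _ => trivial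
  | node l r => by
      rintro ⟨h1, h2, ⟨a, ha, hamin⟩, ⟨b, hb, hbmax⟩⟩
      refine ⟨valid_unshift s l h1, valid_unshift s r h2, ⟨a - s, ?_, ?_⟩, ⟨b - s, ?_, ?_⟩⟩
      · simp only [leaves_unshift, List.mem_map]; exact ⟨a, ha, rfl⟩
      · intro i hi
        simp only [leaves_unshift, ← List.map_append, List.mem_map] at hi
        obtain ⟨j, hj, rfl⟩ := hi
        exact Nat.sub_le_sub_right (hamin j hj) s
      · simp only [leaves_unshift, List.mem_map]; exact ⟨b, hb, rfl⟩
      · intro i hi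
        simp only [leaves_unshift, ← List.map_append, List.mem_map] at hi
        obtain ⟨j, hj, rfl⟩ := hi
        exact Nat.sub_le_sub_right (hbmax j hj) s

theorem leaves_graft (f : ℕ → BTree) : ∀ t, leaves (graft f t) = (leaves t).flatMap (fun i => leaves (f i))
  | leaf i => by simp [graft, leaves]
  | node l r => by simp [graft, leaves, leaves_graft f l, leaves_graft f r]

theorem graft_congr {f g : ℕ → BTree} : ∀ {t}, (∀ i ∈ leaves t, f i = g i) → graft f t = graft g t
  | leaf i, h => by simp [graft]; exact h i (by simp [leaves])
  | node l r, h => by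
      simp only [leaves, List.mem_append] at h
      simp [graft, graft_congr (fun i hi => h i (Or.inl hi)),
        graft_congr (fun i hi => h i (Or.inr hi))]

theorem subtree_graft (f : ℕ → BTree) : ∀ {t} {i}, i ∈ leaves t → IsSubtree (f i) (graft f t)
  | leaf j, i, h => by
      simp [leaves] at h; subst h; exact .refl _
  | node l r, i, h => by
      simp only [leaves, List.mem_append] at h
      rcases h with h | h
      · exact .left (subtree_graft f h)
      · exact .right (subtree_graft f h)

/-- Classification of subtrees of a grafted tree. -/
theorem subtree_graft_cases (f : ℕ → BTree) : ∀ {q s}, IsSubtree s (graft f q) →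
    (∃ i ∈ leaves q, IsSubtree s (f i)) ∨
    (∃ u1 u2, IsSubtree (node u1 u2) q ∧ s = graft f (node u1 u2))
  | leaf i, s, h => Or.inl ⟨i, by simp [leaves], h⟩
  | node q1 q2, s, h => by
      rcases h with _ | h | h
      · exact Or.inr ⟨q1, q2, .refl _, rfl⟩
      · rcases subtree_graft_cases f h with ⟨i, hi, hs⟩ | ⟨u1, u2, hu, hs⟩
        · exact Or.inl ⟨i, by simp [leaves, hi], hs⟩
        · exact Or.inr ⟨u1, u2, .left hu, hs⟩
      · rcases subtree_graft_cases f h with ⟨i, hi, hs⟩ | ⟨u1, u2, hu, hs⟩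
        · exact Or.inl ⟨i, by simp [leaves, hi], hs⟩
        · exact Or.inr ⟨u1, u2, .right hu, hs⟩

/-- Two subtrees sharing a leaf are nested. -/
theorem subtree_nested : ∀ {t s s'}, (leaves t).Nodup → IsSubtree s t → IsSubtree s' t →
    ∀ {j}, j ∈ leaves s → j ∈ leaves s' → IsSubtree s s' ∨ IsSubtree s' s := by
  intro t
  induction t with
  | leaf i =>
      intro s s' _ hs hs' j _ _
      cases hs; cases hs'; exact Or.inl (.refl _)
  | node l r ihl ihr =>
      intro s s' hn hs hs' j hj hj'
      have hnl : (leaves l).Nodup := (List.nodup_append'.mp (by simpa [leaves] using hn)).1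
      have hnr : (leaves r).Nodup := (List.nodup_append'.mp (by simpa [leaves] using hn)).2.1
      have hdisj : ∀ x, x ∈ leaves l → x ∈ leaves r → False := by
        have := (List.nodup_append'.mp (by simpa [leaves] using hn)).2.2
        intro x h1 h2; exact this h1 h2
      rcases hs with _ | hs | hs
      · exact Or.inr hs'
      · rcases hs' with _ | hs' | hs'
        · exact Or.inl (.left hs)
        · exact ihl hnl hs hs' hj hj'
        · exact (hdisj j (hs.subset _ hj) (hs'.subset _ hj')).elim
      · rcases hs' with _ | hs' | hs'
        · exact Or.inl (.right hs)
        · exact (hdisj j (hs'.subset _ hj') (hs.subset _ hj)).elim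
        · exact ihr hnr hs hs' hj hj'

end BTree
namespace BTree

/-- The maximal connected subtrees, from left to right. -/
def tops : BTree → List BTree
  | leaf i => [leaf i]
  | node l r => if connected (node l r) then [node l r] else tops l ++ tops r

theorem tops_of_connected {t : BTree} (h : connected t) : tops t = [t] := by
  cases t with
  | leaf i => rfl
  | node l r => simp [tops, h]

theorem tops_flat : ∀ t : BTree, (tops t).flatMap leaves = leaves t
  | leaf i => by simp [tops]
  | node l r => by
      by_cases h : connected (node l r)
      · simp [tops, h]
      · simp only [tops, h, if_false, List.flatMap_append, tops_flat l, tops_flat r, leaves]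

theorem tops_ne_nil (t : BTree) : tops t ≠ [] := by
  intro h
  have := tops_flat t
  rw [h] at this
  exact leaves_ne_nil t this.symm

theorem mem_tops_subtree : ∀ {t B : BTree}, B ∈ tops t → IsSubtree B t := by
  intro t
  induction t with
  | leaf i => intro B hB; simp [tops] at hB; subst hB; exact .refl _
  | node l r ihl ihr =>
      intro B hB
      by_cases h : connected (node l r)
      · simp [tops, h] at hB; subst hB; exact .refl _
      · simp only [tops, h, if_false, List.mem_append] at hB
        rcases hB with hB | hB
        · exact .left (ihl hB)
        · exact .right (ihr hB)

theorem mem_tops_connected : ∀ {t B : BTree}, B ∈ tops t → connected B := by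
  intro t
  induction t with
  | leaf i => intro B hB; simp [tops] at hB; subst hB; exact connected_leaf i
  | node l r ihl ihr =>
      intro B hB
      by_cases h : connected (node l r)
      · simp [tops, h] at hB; subst hB; exact h
      · simp only [tops, h, if_false, List.mem_append] at hB
        rcases hB with hB | hB
        · exact ihl hB
        · exact ihr hB

/-- Maximality of tops: any connected subtree sharing a leaf with a top is contained in it. -/
theorem tops_max : ∀ {t s B : BTree}, (leaves t).Nodup → IsSubtree s t → connected s →
    B ∈ tops t → ∀ {j}, j ∈ leaves s → j ∈ leaves B → IsSubtree s B := by
  intro t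
  induction t with
  | leaf i =>
      intro s B _ hs _ hB j _ _
      simp [tops] at hB; subst hB; cases hs; exact .refl _
  | node l r ihl ihr =>
      intro s B hn hs hcs hB j hjs hjB
      by_cases h : connected (node l r)
      · simp [tops, h] at hB; subst hB; exact hs
      · simp only [tops, h, if_false, List.mem_append] at hB
        have hnl : (leaves l).Nodup := (List.nodup_append'.mp (by simpa [leaves] using hn)).1
        have hnr : (leaves r).Nodup := (List.nodup_append'.mp (by simpa [leaves] using hn)).2.1
        have hdisj : ∀ x, x ∈ leaves l → x ∈ leaves r → False := by
          have := (List.nodup_append'.mp (by simpa [leaves] using hn)).2.2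
          intro x h1 h2; exact this h1 h2
        rcases hs with _ | hs | hs
        · exact (h hcs).elim
        · rcases hB with hB | hB
          · exact ihl hnl hs hcs hB hjs hjB
          · exact (hdisj j (hs.subset _ hjs) ((mem_tops_subtree hB).subset _ hjB)).elim
        · rcases hB with hB | hB
          · exact (hdisj j ((mem_tops_subtree hB).subset _ hjB) (hs.subset _ hjs)).elim
          · exact ihr hnr hs hcs hB hjs hjB

/-- Contract each top to a leaf labeled via `rk`. -/
def contrC (rk : BTree → ℕ) : BTree → BTree
  | leaf i => leaf (rk (leaf i))
  | node l r =>
      if connected (node l r) then leaf (rk (node l r))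
      else node (contrC rk l) (contrC rk r)

theorem contrC_of_connected (rk : BTree → ℕ) {t : BTree} (h : connected t) :
    contrC rk t = leaf (rk t) := by
  cases t with
  | leaf i => rfl
  | node l r => simp [contrC, h]

theorem leaves_contrC (rk : BTree → ℕ) : ∀ t, leaves (contrC rk t) = (tops t).map rk := by
  intro t
  induction t with
  | leaf i => simp [contrC, tops, leaves]
  | node l r ihl ihr =>
      by_cases h : connected (node l r)
      · simp [contrC, tops, h, leaves]
      · simp [contrC, tops, h, leaves, ihl, ihr]

theorem graft_contrC (rk : BTree → ℕ) (f : ℕ → BTree) :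
    ∀ t, (∀ B ∈ tops t, f (rk B) = B) → graft f (contrC rk t) = t := by
  intro t
  induction t with
  | leaf i => intro hf; simpa [contrC, graft] using hf (leaf i) (by simp [tops])
  | node l r ihl ihr =>
      intro hf
      by_cases h : connected (node l r)
      · simp only [contrC_of_connected rk h, graft]
        exact hf _ (by simp [tops_of_connected h])
      · simp only [tops, h, if_false, List.mem_append] at hf
        simp only [contrC, h, if_false, graft]
        rw [ihl (fun B hB => hf B (Or.inl hB)), ihr (fun B hB => hf B (Or.inr hB))]

theorem subtree_contrC_cases (rk : BTree → ℕ) : ∀ {t s}, IsSubtree s (contrC rk t) →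
    ∃ u, IsSubtree u t ∧ s = contrC rk u ∧ ∀ B ∈ tops u, B ∈ tops t := by
  intro t
  induction t with
  | leaf i =>
      intro s hs
      simp only [contrC] at hs
      cases hs
      exact ⟨leaf i, .refl _, rfl, fun B hB => hB⟩
  | node l r ihl ihr =>
      intro s hs
      by_cases h : connected (node l r)
      · rw [contrC_of_connected rk h] at hs
        cases hs
        exact ⟨node l r, .refl _, (contrC_of_connected rk h).symm, fun B hB => hB⟩
      · simp only [contrC, h, if_false] at hs
        rcases hs with _ | hs | hs
        · exact ⟨node l r, .refl _, by simp [contrC, h], fun B hB => hB⟩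
        · obtain ⟨u, hu, rfl, htops⟩ := ihl hs
          exact ⟨u, .left hu, rfl, fun B hB => by
            simp only [tops, h, if_false, List.mem_append]; exact Or.inl (htops B hB)⟩
        · obtain ⟨u, hu, rfl, htops⟩ := ihr hs
          exact ⟨u, .right hu, rfl, fun B hB => by
            simp only [tops, h, if_false, List.mem_append]; exact Or.inr (htops B hB)⟩

/-- If `contrC rk u` is a node then `u` is a non-connected node. -/
theorem contrC_node {rk : BTree → ℕ} {u c1 c2 : BTree} (h : contrC rk u = node c1 c2) :
    ¬ connected u ∧ ∃ u1 u2, u = node u1 u2 := by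
  cases u with
  | leaf i => simp [contrC] at h
  | node l r =>
      by_cases hc : connected (node l r)
      · rw [contrC_of_connected rk hc] at h; simp at h
      · exact ⟨hc, l, r, rfl⟩

end BTree
namespace BTree

/-- `Tiles L a` : the leaf sets of the trees in `L` tile consecutive intervals starting at `a`. -/
def Tiles : List BTree → ℕ → Prop
  | [], _ => True
  | B :: L, a => (leaves B).Perm (List.range' a (numLeaves B)) ∧ Tiles L (a + numLeaves B)

/-- Offset: total number of leaves of the first `k` trees. -/
def off (L : List BTree) (k : ℕ) : ℕ := ((L.take k).map numLeaves).sum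

@[simp] theorem off_zero (L : List BTree) : off L 0 = 0 := by simp [off]

theorem off_succ : ∀ (L : List BTree) (k : ℕ), k < L.length →
    off L (k + 1) = off L k + numLeaves (L.getD k (leaf 0))
  | [], k, h => by simp at h
  | B :: L, 0, _ => by simp [off]
  | B :: L, k + 1, h => by
      have ih := off_succ L k (by simpa using h)
      simp only [off, List.take_succ_cons, List.map_cons, List.sum_cons,
        List.getD_cons_succ] at ih ⊢
      omega

theorem off_mono : ∀ (L : List BTree) {k k' : ℕ}, k ≤ k' → off L k ≤ off L k'
  | [], _, _, _ => by simp [off]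
  | B :: L, 0, k', _ => Nat.zero_le _
  | B :: L, k + 1, 0, h => absurd h (by omega)
  | B :: L, k + 1, k' + 1, h => by
      simp only [off, List.take_succ_cons, List.map_cons, List.sum_cons]
      exact Nat.add_le_add_left (off_mono L (Nat.le_of_succ_le_succ h)) _

theorem off_lt_succ (L : List BTree) {k : ℕ} (h : k < L.length) :
    off L k < off L (k + 1) := by
  rw [off_succ L k h]
  have := numLeaves_pos (L.getD k (leaf 0))
  omega

theorem toFinset_range' (a len : ℕ) : (List.range' a len).toFinset = Finset.Ico a (a + len) := by
  ext x; simp [List.mem_range'_1]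

theorem tiles_getD : ∀ (L : List BTree) (a : ℕ), Tiles L a → ∀ k, k < L.length →
    (leaves (L.getD k (leaf 0))).Perm
      (List.range' (a + off L k) (numLeaves (L.getD k (leaf 0))))
  | [], _, _, k, h => by simp at h
  | B :: L, a, ⟨h1, h2⟩, 0, _ => by simpa [off] using h1
  | B :: L, a, ⟨h1, h2⟩, k + 1, h => by
      have ih := tiles_getD L (a + numLeaves B) h2 k (by simpa using h)
      simp only [List.getD_cons_succ]
      have he : a + off (B :: L) (k + 1) = a + numLeaves B + off L k := by
        simp only [off, List.take_succ_cons, List.map_cons, List.sum_cons]; omega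
      rw [he]
      exact ih

theorem tiles_flat : ∀ (L : List BTree) (a : ℕ), Tiles L a →
    (L.flatMap leaves).Perm (List.range' a ((L.map numLeaves).sum))
  | [], a, _ => by simp
  | B :: L, a, ⟨h1, h2⟩ => by
      have ih := tiles_flat L (a + numLeaves B) h2
      simp only [List.flatMap_cons, List.map_cons, List.sum_cons]
      have h3 := List.range'_append (s := a) (m := numLeaves B) (n := (L.map numLeaves).sum) (step := 1)
      simp only [one_mul] at h3
      have h4 : List.range' a (numLeaves B) ++
          List.range' (a + numLeaves B) ((L.map numLeaves).sum) =
          List.range' a (numLeaves B + (L.map numLeaves).sum) := by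
        rw [h3, Nat.add_comm]
      exact (h1.append ih).trans (h4 ▸ List.Perm.refl _)

theorem tiles_lset (L : List BTree) (hT : Tiles L 1) {k : ℕ} (h : k < L.length) :
    (leaves (L.getD k (leaf 0))).toFinset = Finset.Ico (1 + off L k) (1 + off L (k + 1)) := by
  rw [List.toFinset_eq_of_perm _ _ (tiles_getD L 1 hT k h), toFinset_range', off_succ L k h]
  congr 1; omega

theorem tiles_connected (L : List BTree) (hT : Tiles L 1) {k : ℕ} (h : k < L.length) :
    connected (L.getD k (leaf 0)) := by
  refine ⟨1 + off L k, off L (k + 1), ?_⟩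
  rw [tiles_lset L hT h]
  ext x
  have := off_lt_succ L h
  simp only [Finset.mem_Ico, Finset.mem_Icc]; omega

/-- Locate an offset interval: if `off k ≤ off k' < off (k+1)` with both indices in
range, then `k = k'`. -/
theorem off_locate (L : List BTree) {k k' : ℕ} (hk : k < L.length) (hk' : k' < L.length)
    (h1 : off L k ≤ off L k') (h2 : off L k' < off L (k + 1)) : k = k' := by
  rcases Nat.lt_trichotomy k k' with h | h | h
  · exact absurd (off_mono L (show k + 1 ≤ k' from h)) (by omega)
  · exact h
  · have h3 : off L (k' + 1) ≤ off L k := off_mono L h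
    have h4 : off L k' < off L (k' + 1) := off_lt_succ L hk'
    omega

theorem union_consec (L : List BTree) (hT : Tiles L 1) :
    ∀ (b a : ℕ), a ≤ b → b < L.length →
    (Finset.Icc a b).biUnion (fun k => (leaves (L.getD k (leaf 0))).toFinset) =
      Finset.Ico (1 + off L a) (1 + off L (b + 1)) := by
  intro b
  induction b with
  | zero =>
      intro a ha hb
      interval_cases a
      simpa using tiles_lset L hT hb
  | succ b ih =>
      intro a ha hb
      rcases Nat.lt_or_ge b a with h | h
      · -- a = b + 1
        have : a = b + 1 := by omega
        subst this
        simpa using tiles_lset L hT hb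
      · rw [show Finset.Icc a (b + 1) = insert (b + 1) (Finset.Icc a b) by
          ext z; simp only [Finset.mem_Icc, Finset.mem_insert]; omega]
        rw [Finset.biUnion_insert, ih a h (by omega), tiles_lset L hT hb]
        have h1 : off L a ≤ off L (b + 1) := off_mono L (by omega)
        have h2 := off_lt_succ L hb
        ext x
        simp only [Finset.mem_union, Finset.mem_Ico]
        omega

theorem consec_of_union (L : List BTree) (hT : Tiles L 1) (K : Finset ℕ)
    (hK : ∀ k ∈ K, k < L.length) {x y : ℕ}
    (hU : K.biUnion (fun k => (leaves (L.getD k (leaf 0))).toFinset) = Finset.Icc x y) :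
    ∀ k1 ∈ K, ∀ k2 ∈ K, ∀ k', k1 ≤ k' → k' ≤ k2 → k' ∈ K := by
  intro k1 hk1 k2 hk2 k' h1 h2
  have hk1' := hK k1 hk1
  have hk2' := hK k2 hk2
  have hkk : k' < L.length := by omega
  -- the element e = 1 + off k' belongs to the union
  set e := 1 + off L k' with he
  have he1 : 1 + off L k1 ∈ Finset.Icc x y := by
    rw [← hU]
    refine Finset.mem_biUnion.mpr ⟨k1, hk1, ?_⟩
    rw [tiles_lset L hT hk1']
    have := off_lt_succ L hk1'
    simp only [Finset.mem_Ico]; omega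
  have he2 : off L (k2 + 1) ∈ Finset.Icc x y := by
    rw [← hU]
    refine Finset.mem_biUnion.mpr ⟨k2, hk2, ?_⟩
    rw [tiles_lset L hT hk2']
    have := off_lt_succ L hk2'
    simp only [Finset.mem_Ico]; omega
  simp only [Finset.mem_Icc] at he1 he2
  have hm1 : off L k1 ≤ off L k' := off_mono L h1
  have hm2 : off L (k' + 1) ≤ off L (k2 + 1) := off_mono L (by omega)
  have hs : off L k' < off L (k' + 1) := off_lt_succ L hkk
  have heU : e ∈ K.biUnion (fun k => (leaves (L.getD k (leaf 0))).toFinset) := by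
    rw [hU]; simp only [Finset.mem_Icc]; omega
  obtain ⟨k, hk, hke⟩ := Finset.mem_biUnion.mp heU
  rw [tiles_lset L hT (hK k hk)] at hke
  simp only [Finset.mem_Ico] at hke
  have : k = k' := off_locate L (hK k hk) hkk (by omega) (by omega)
  subst this; exact hk

end BTree
namespace BTree

theorem tiles_of_getD : ∀ (L : List BTree) (a : ℕ),
    (∀ k, (h : k < L.length) → (leaves (L.getD k (leaf 0))).Perm
      (List.range' (a + off L k) (numLeaves (L.getD k (leaf 0))))) → Tiles L a
  | [], a, _ => trivial
  | B :: L, a, h => by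
      constructor
      · simpa [off] using h 0 (by simp)
      · refine tiles_of_getD L (a + numLeaves B) (fun k hk => ?_)
        have := h (k + 1) (by simpa using hk)
        simp only [List.getD_cons_succ] at this
        have he : a + off (B :: L) (k + 1) = a + numLeaves B + off L k := by
          simp only [off, List.take_succ_cons, List.map_cons, List.sum_cons]; omega
        rwa [he] at this

theorem map_add_range'' (o : ℕ) : ∀ (a len : ℕ),
    (List.range' a len).map (· + o) = List.range' (a + o) len
  | a, 0 => by simp
  | a, len + 1 => by
      rw [List.range'_succ, List.range'_succ, List.map_cons, map_add_range'' o (a+1) len]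
      simp; omega

theorem map_sub_range' (o : ℕ) : ∀ (a len : ℕ), o ≤ a →
    (List.range' a len).map (· - o) = List.range' (a - o) len
  | a, 0, _ => by simp
  | a, len + 1, h => by
      rw [List.range'_succ, List.range'_succ, List.map_cons,
        map_sub_range' o (a+1) len (by omega), show a + 1 - o = a - o + 1 by omega]

theorem toFinset_flatMap (f : BTree → List ℕ) : ∀ (L : List BTree),
    (L.flatMap f).toFinset = L.toFinset.biUnion (fun B => (f B).toFinset)
  | [] => by simp
  | B :: L => by
      simp [List.flatMap_cons, List.toFinset_append, toFinset_flatMap f L]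

theorem toFinset_flatMapN (f : ℕ → List ℕ) : ∀ (L : List ℕ),
    (L.flatMap f).toFinset = L.toFinset.biUnion (fun B => (f B).toFinset)
  | [] => by simp
  | B :: L => by
      simp [List.flatMap_cons, List.toFinset_append, toFinset_flatMapN f L]

theorem sum_lt_of_two (L : List ℕ) (h1 : ∀ x ∈ L, 1 ≤ x) (h2 : 2 ≤ L.length) :
    ∀ x ∈ L, x < L.sum := by
  intro x hx
  obtain ⟨L1, L2, rfl⟩ := List.append_of_mem hx
  simp only [List.length_append, List.length_cons] at h2
  have hs1 : L1.length ≤ L1.sum :=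
    List.length_le_sum_of_one_le L1 (fun i hi => h1 i (by simp [hi]))
  have hs2 : L2.length ≤ L2.sum :=
    List.length_le_sum_of_one_le L2 (fun i hi => h1 i (by simp [hi]))
  rw [List.sum_append, List.sum_cons]
  omega

/-- The trees of `Cs`, each shifted by the total size of its predecessors. -/
def shifted (Cs : List BTree) : List BTree :=
  (List.range Cs.length).map (fun k => shift (off Cs k) (Cs.getD k (leaf 0)))

@[simp] theorem length_shifted (Cs : List BTree) : (shifted Cs).length = Cs.length := by
  simp [shifted]

theorem shifted_getD (Cs : List BTree) {k : ℕ} (h : k < Cs.length) :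
    (shifted Cs).getD k (leaf 0) = shift (off Cs k) (Cs.getD k (leaf 0)) := by
  rw [List.getD_eq_getElem _ _ (by simpa using h)]
  simp [shifted]

theorem map_numLeaves_shifted (Cs : List BTree) :
    (shifted Cs).map numLeaves = Cs.map numLeaves := by
  refine List.ext_getElem (by simp) ?_
  intro k h1 h2
  simp only [List.getElem_map]
  have hk : k < Cs.length := by simpa using h2
  have := shifted_getD Cs hk
  rw [List.getD_eq_getElem _ _ (by simpa using hk), List.getD_eq_getElem _ _ hk] at this
  rw [this, numLeaves_shift]

theorem off_shifted (Cs : List BTree) (k : ℕ) : off (shifted Cs) k = off Cs k := by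
  simp only [off, List.map_take, map_numLeaves_shifted]

theorem tiles_shifted (Cs : List BTree) (hC : ∀ C ∈ Cs, (leaves C).Perm (List.range' 1 (numLeaves C))) :
    Tiles (shifted Cs) 1 := by
  refine tiles_of_getD _ 1 (fun k hk => ?_)
  have hk' : k < Cs.length := by simpa using hk
  rw [shifted_getD Cs hk', off_shifted]
  rw [leaves_shift, numLeaves_shift]
  have hmem : Cs.getD k (leaf 0) ∈ Cs := by
    rw [List.getD_eq_getElem _ _ hk']; exact List.getElem_mem _
  have := (hC _ hmem).map (· + off Cs k)
  rw [map_add_range''] at this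
  exact this

theorem lmin_of_perm_range' {t : BTree} {a len : ℕ} (hlen : 0 < len)
    (h : (leaves t).Perm (List.range' a len)) : lmin t = a := by
  have h1 : lmin t ∈ List.range' a len := h.mem_iff.mp (lmin_mem t)
  have h2 : a ∈ leaves t := h.mem_iff.mpr (by rw [List.mem_range'_1]; omega)
  rw [List.mem_range'_1] at h1
  exact le_antisymm (lmin_le t a h2) h1.1

theorem tiles_lmin (L : List BTree) (hT : Tiles L 1) {k : ℕ} (h : k < L.length) :
    lmin (L.getD k (leaf 0)) = 1 + off L k :=
  lmin_of_perm_range' (numLeaves_pos _) (tiles_getD L 1 hT k h)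

/-- A tiled list is strictly sorted by `lmin`. -/
theorem tiles_pairwise_lmin (L : List BTree) (hT : Tiles L 1) :
    L.Pairwise (fun B B' => lmin B < lmin B') := by
  rw [List.pairwise_iff_getElem]
  intro i j hi hj hij
  have h1 : lmin L[i] = 1 + off L i := by
    rw [← List.getD_eq_getElem _ (leaf 0) hi]; exact tiles_lmin L hT hi
  have h2 : lmin L[j] = 1 + off L j := by
    rw [← List.getD_eq_getElem _ (leaf 0) hj]; exact tiles_lmin L hT hj
  have h3 : off L (i + 1) ≤ off L j := off_mono L hij
  have h4 : off L i < off L (i + 1) := off_lt_succ L hi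
  omega

end BTree
namespace BTree

theorem nodup_perm_Icc {lst : List ℕ} {a b : ℕ} (hn : lst.Nodup)
    (h : lst.toFinset = Finset.Icc a b) (hab : a ≤ b) :
    lst.Perm (List.range' a (b - a + 1)) := by
  refine List.perm_of_nodup_nodup_toFinset_eq hn List.nodup_range' ?_
  rw [h, toFinset_range']
  ext x; simp only [Finset.mem_Icc, Finset.mem_Ico]; omega

theorem tiles_of_sorted : ∀ (L : List BTree) (a len : ℕ),
    (∀ B ∈ L, connected B ∧ (leaves B).Nodup) →
    L.Pairwise (fun B B' => lmin B < lmin B') →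
    (L.flatMap leaves).Perm (List.range' a len) → Tiles L a
  | [], _, _, _, _, _ => trivial
  | B :: L, a, len, hc, hp, hperm => by
      obtain ⟨hcB, hnB⟩ := hc B (by simp)
      have hlB : 0 < (leaves B).length := by
        have := leaves_ne_nil B
        exact List.length_pos_iff.mpr this
      have hlen0 : 0 < len := by
        have h1 := hperm.length_eq
        rw [List.length_range'] at h1
        simp only [List.flatMap_cons, List.length_append] at h1
        omega
      have hminmem : lmin B ∈ (B :: L).flatMap leaves := by
        simp only [List.flatMap_cons, List.mem_append]
        exact Or.inl (lmin_mem B)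
      have hminrange := hperm.mem_iff.mp hminmem
      rw [List.mem_range'_1] at hminrange
      have haB : a ∈ leaves B := by
        have ha : a ∈ (B :: L).flatMap leaves :=
          hperm.mem_iff.mpr (by rw [List.mem_range'_1]; omega)
        simp only [List.flatMap_cons, List.mem_append, List.mem_flatMap] at ha
        rcases ha with h | ⟨B', hB', haB'⟩
        · exact h
        · exfalso
          have h1 : lmin B < lmin B' := (List.pairwise_cons.mp hp).1 B' hB'
          have h2 : lmin B' ≤ a := lmin_le B' a haB'
          omega
      have hminB : lmin B = a := le_antisymm (lmin_le B a haB) hminrange.1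
      have hIcc := (connected_iff B).mp hcB
      rw [hminB] at hIcc
      have hpermB : (leaves B).Perm (List.range' a (lmax B - a + 1)) :=
        nodup_perm_Icc hnB hIcc (hminB ▸ lmin_le_lmax B)
      have hnum : numLeaves B = lmax B - a + 1 := by
        have := hpermB.length_eq; rw [List.length_range'] at this; exact this
      have hhead : (leaves B).Perm (List.range' a (numLeaves B)) := by rw [hnum]; exact hpermB
      refine ⟨hhead, ?_⟩
      have hle : numLeaves B ≤ len := by
        have h6 := hperm.length_eq
        rw [List.length_range'] at h6
        simp only [List.flatMap_cons, List.length_append] at h6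
        simp only [numLeaves]; omega
      have h5 := List.range'_append (s := a) (m := numLeaves B) (n := len - numLeaves B) (step := 1)
      simp only [one_mul] at h5
      have hsplit : List.range' a len =
          List.range' a (numLeaves B) ++ List.range' (a + numLeaves B) (len - numLeaves B) := by
        rw [h5, show numLeaves B + (len - numLeaves B) = len from by omega]
      have hperm' : (leaves B ++ L.flatMap leaves).Perm
          (List.range' a (numLeaves B) ++ List.range' (a + numLeaves B) (len - numLeaves B)) := by
        rw [← hsplit]
        simpa only [List.flatMap_cons] using hperm
      have htail : (L.flatMap leaves).Perm (List.range' (a + numLeaves B) (len - numLeaves B)) :=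
        (List.perm_append_left_iff _).mp ((hhead.symm.append_right _).trans hperm')
      exact tiles_of_sorted L (a + numLeaves B) (len - numLeaves B)
        (fun B' h => hc B' (by simp [h])) (List.pairwise_cons.mp hp).2 htail

end BTree
namespace BTree

/-- The blocks of `A = node l r`: maximal proper connected subtrees, left-to-right. -/
def blocks0 (l r : BTree) : List BTree := tops l ++ tops r

/-- The blocks sorted by minimum label. -/
def sortedB (l r : BTree) : List BTree :=
  (blocks0 l r).mergeSort (fun s t => decide (lmin s ≤ lmin t))

/-- Rank of a block (1-based position in the sorted list). -/
def rkF (l r : BTree) (B : BTree) : ℕ := (sortedB l r).idxOf B + 1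

/-- The prime skeleton. -/
def pTree (l r : BTree) : BTree := node (contrC (rkF l r) l) (contrC (rkF l r) r)

/-- The list of blocks, sorted and normalized to start at 1. -/
def BsList (l r : BTree) : List BTree :=
  (sortedB l r).map (fun B => unshift (lmin B - 1) B)

section Ctx

variable {n : ℕ} {l r : BTree}

theorem mem_sortedB_iff {B : BTree} : B ∈ sortedB l r ↔ B ∈ blocks0 l r :=
  (List.mergeSort_perm (blocks0 l r) _).mem_iff

theorem blocks0_flat : (blocks0 l r).flatMap leaves = leaves (node l r) := by
  simp only [blocks0, List.flatMap_append, tops_flat, leaves]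

theorem blocks0_subtree {B : BTree} (h : B ∈ blocks0 l r) : IsSubtree B (node l r) := by
  rcases List.mem_append.mp h with h | h
  · exact .left (mem_tops_subtree h)
  · exact .right (mem_tops_subtree h)

theorem blocks0_connected {B : BTree} (h : B ∈ blocks0 l r) : connected B := by
  rcases List.mem_append.mp h with h | h
  · exact mem_tops_connected h
  · exact mem_tops_connected h

theorem memL.nodupA (hL : memL n (node l r)) : (leaves (node l r)).Nodup :=
  hL.1.nodup_iff.mpr List.nodup_range'

theorem blocks0_nodupLeaves (hL : memL n (node l r)) {B : BTree} (h : B ∈ blocks0 l r) :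
    (leaves B).Nodup := (blocks0_subtree h).nodup hL.nodupA

theorem blocks0_flatNodup (hL : memL n (node l r)) :
    ((blocks0 l r).flatMap leaves).Nodup := by rw [blocks0_flat]; exact hL.nodupA

theorem blocks0_pairwiseDisjoint (hL : memL n (node l r)) :
    (blocks0 l r).Pairwise (Function.onFun List.Disjoint leaves) :=
  (List.nodup_flatMap.mp (blocks0_flatNodup hL)).2

theorem blocks0_eq_of_shared (hL : memL n (node l r)) {B B' : BTree} {j : ℕ}
    (hB : B ∈ blocks0 l r) (hB' : B' ∈ blocks0 l r)
    (hj : j ∈ leaves B) (hj' : j ∈ leaves B') : B = B' := by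
  by_contra hne
  have hsym : Symmetric (Function.onFun List.Disjoint (leaves : BTree → List ℕ)) :=
    fun a b h => h.symm
  haveI : Std.Symm (Function.onFun List.Disjoint (leaves : BTree → List ℕ)) := ⟨fun a b h => hsym h⟩
  exact (blocks0_pairwiseDisjoint hL).forall hB hB' hne hj hj' 

theorem blocks0_nodup (hL : memL n (node l r)) : (blocks0 l r).Nodup := by
  refine List.Pairwise.imp_of_mem ?_ (blocks0_pairwiseDisjoint hL)
  intro a b ha hb hdisj
  intro he
  subst he
  exact hdisj (lmin_mem a) (lmin_mem a)

theorem sortedB_nodup (hL : memL n (node l r)) : (sortedB l r).Nodup :=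
  (List.mergeSort_perm (blocks0 l r) _).nodup_iff.mpr (blocks0_nodup hL)

theorem lmin_inj_blocks (hL : memL n (node l r)) {B B' : BTree}
    (hB : B ∈ blocks0 l r) (hB' : B' ∈ blocks0 l r) (hne : B ≠ B') :
    lmin B ≠ lmin B' := by
  intro he
  exact hne (blocks0_eq_of_shared hL hB hB' (lmin_mem B) (he ▸ lmin_mem B'))

theorem sortedB_pairwise_lt (hL : memL n (node l r)) :
    (sortedB l r).Pairwise (fun B B' => lmin B < lmin B') := by
  have h1 : (sortedB l r).Pairwise (fun B B' => lmin B ≤ lmin B') := by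
    refine List.Pairwise.imp ?_ (List.pairwise_mergeSort ?_ ?_ (blocks0 l r))
    · intro a b h; exact of_decide_eq_true h
    · intro a b c h1 h2
      simp only [decide_eq_true_eq] at *; omega
    · intro a b; simp only [Bool.or_eq_true, decide_eq_true_eq]; omega
  have h2 : (sortedB l r).Pairwise (· ≠ ·) := sortedB_nodup hL
  refine List.Pairwise.imp_of_mem ?_ (h1.and h2)
  rintro a b ha hb ⟨hle, hne⟩
  exact lt_of_le_of_ne hle
    (lmin_inj_blocks hL (mem_sortedB_iff.mp ha) (mem_sortedB_iff.mp hb) hne)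

theorem tiles_sortedB (hL : memL n (node l r)) : Tiles (sortedB l r) 1 := by
  refine tiles_of_sorted _ 1 n ?_ (sortedB_pairwise_lt hL) ?_
  · intro B hB
    exact ⟨blocks0_connected (mem_sortedB_iff.mp hB),
      blocks0_nodupLeaves hL (mem_sortedB_iff.mp hB)⟩
  · refine (List.Perm.flatMap_right leaves (List.mergeSort_perm _ _)).trans ?_
    rw [blocks0_flat]
    exact hL.1

end Ctx

end BTree
namespace BTree

section Ctx

variable {n : ℕ} {l r : BTree}

theorem length_sortedB : (sortedB l r).length = (blocks0 l r).length :=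
  (List.mergeSort_perm (blocks0 l r) _).length_eq

theorem two_le_length_sortedB : 2 ≤ (sortedB l r).length := by
  rw [length_sortedB]
  have h1 := List.length_pos_iff.mpr (tops_ne_nil l)
  have h2 := List.length_pos_iff.mpr (tops_ne_nil r)
  simp only [blocks0, List.length_append]
  omega

theorem rk_getD (hL : memL n (node l r)) {k : ℕ} (hk : k < (sortedB l r).length) :
    rkF l r ((sortedB l r).getD k (leaf 0)) = k + 1 := by
  rw [rkF, List.getD_eq_getElem _ _ hk, (sortedB_nodup hL).idxOf_getElem k hk]

theorem getD_sortedB_mem {k : ℕ} (hk : k < (sortedB l r).length) :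
    (sortedB l r).getD k (leaf 0) ∈ sortedB l r := by
  rw [List.getD_eq_getElem _ _ hk]; exact List.getElem_mem _

theorem sortedB_getD_indexOf {B : BTree} (hB : B ∈ sortedB l r) :
    (sortedB l r).getD ((sortedB l r).idxOf B) (leaf 0) = B := by
  rw [List.getD_eq_getElem _ _ (List.idxOf_lt_length_iff.mpr hB)]
  exact List.getElem_idxOf _

theorem rk_le_length {B : BTree} (hB : B ∈ sortedB l r) :
    rkF l r B ≤ (sortedB l r).length ∧ 1 ≤ rkF l r B := by
  have := List.idxOf_lt_length_iff.mpr hB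
  constructor
  · simp only [rkF]; omega
  · simp [rkF]

theorem map_rk_sortedB (hL : memL n (node l r)) :
    (sortedB l r).map (rkF l r) = List.range' 1 (sortedB l r).length := by
  refine List.ext_getElem (by simp) ?_
  intro k h1 h2
  have hk : k < (sortedB l r).length := by simpa using h1
  rw [List.getElem_map, List.getElem_range']
  rw [show (sortedB l r)[k] = (sortedB l r).getD k (leaf 0) from
    (List.getD_eq_getElem _ _ hk).symm]
  rw [rk_getD hL hk]
  omega

theorem leaves_pTree : leaves (pTree l r) = (blocks0 l r).map (rkF l r) := by
  simp only [pTree, leaves, leaves_contrC, blocks0, List.map_append]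

theorem perm_leaves_pTree (hL : memL n (node l r)) :
    (leaves (pTree l r)).Perm (List.range' 1 (sortedB l r).length) := by
  rw [leaves_pTree, ← map_rk_sortedB hL]
  exact ((List.mergeSort_perm (blocks0 l r) _).map _).symm

theorem rk_mono_min (hL : memL n (node l r)) {B B' : BTree}
    (hB : B ∈ blocks0 l r) (hB' : B' ∈ blocks0 l r) (h : lmin B ≤ lmin B') :
    rkF l r B ≤ rkF l r B' := by
  by_cases he : B = B'
  · subst he; exact le_refl _
  · have hlt : lmin B < lmin B' := lt_of_le_of_ne h (lmin_inj_blocks hL hB hB' he)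
    have hBm : B ∈ sortedB l r := mem_sortedB_iff.mpr hB
    have hBm' : B' ∈ sortedB l r := mem_sortedB_iff.mpr hB'
    have hi : (sortedB l r).idxOf B < (sortedB l r).length := List.idxOf_lt_length_iff.mpr hBm
    have hi' : (sortedB l r).idxOf B' < (sortedB l r).length := List.idxOf_lt_length_iff.mpr hBm'
    rcases Nat.lt_or_ge ((sortedB l r).idxOf B) ((sortedB l r).idxOf B') with hij | hij
    · simp only [rkF]; omega
    · exfalso
      have hne : (sortedB l r).idxOf B' ≠ (sortedB l r).idxOf B := by
        intro he'
        apply he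
        rw [← sortedB_getD_indexOf hBm, ← sortedB_getD_indexOf hBm', he']
      have := (List.pairwise_iff_getElem.mp (sortedB_pairwise_lt hL))
        ((sortedB l r).idxOf B') ((sortedB l r).idxOf B) hi' hi (by omega)
      rw [List.getElem_idxOf, List.getElem_idxOf] at this
      omega

theorem lmax_lt_of_lmin_lt (hL : memL n (node l r)) {B B' : BTree}
    (hB : B ∈ blocks0 l r) (hB' : B' ∈ blocks0 l r) (h : lmin B < lmin B') :
    lmax B < lmin B' := by
  by_contra hc
  push_neg at hc
  have h1 : lmin B' ∈ leaves B := by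
    have := (connected_iff B).mp (blocks0_connected hB)
    have h2 : lmin B' ∈ (leaves B).toFinset := by
      rw [this]; simp only [Finset.mem_Icc]; omega
    simpa using h2
  have := blocks0_eq_of_shared hL hB hB' h1 (lmin_mem B')
  subst this
  omega

theorem rk_mono_max (hL : memL n (node l r)) {B B' : BTree}
    (hB : B ∈ blocks0 l r) (hB' : B' ∈ blocks0 l r) (h : lmax B ≤ lmax B') :
    rkF l r B ≤ rkF l r B' := by
  by_cases he : B = B'
  · subst he; exact le_refl _
  · refine rk_mono_min hL hB hB' ?_
    rcases Nat.lt_or_ge (lmin B') (lmin B) with hlt | hge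
    · exfalso
      have := lmax_lt_of_lmin_lt hL hB' hB hlt
      have := lmin_le_lmax B
      omega
    · exact hge

theorem exists_min_rk (hL : memL n (node l r)) (t1 t2 : BTree) (hv : valid (node t1 t2))
    (h1 : ∀ B ∈ tops t1 ++ tops t2, B ∈ blocks0 l r) :
    ∃ a ∈ leaves (contrC (rkF l r) t1),
      ∀ i ∈ leaves (contrC (rkF l r) t1) ++ leaves (contrC (rkF l r) t2), a ≤ i := by
  obtain ⟨a0, ha0, hmin⟩ := hv.2.2.1
  obtain ⟨B0, hB0, ha0B⟩ := List.mem_flatMap.mp (by rw [tops_flat]; exact ha0 :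
    a0 ∈ (tops t1).flatMap leaves)
  refine ⟨rkF l r B0, ?_, ?_⟩
  · rw [leaves_contrC]; exact List.mem_map.mpr ⟨B0, hB0, rfl⟩
  · intro i hi
    simp only [leaves_contrC, ← List.map_append, List.mem_map] at hi
    obtain ⟨B', hB', rfl⟩ := hi
    refine rk_mono_min hL (h1 B0 (List.mem_append.mpr (Or.inl hB0))) (h1 B' hB') ?_
    have h2 : lmin B0 ≤ a0 := lmin_le B0 a0 ha0B
    have h3 : a0 ≤ lmin B' := by
      apply hmin
      rcases List.mem_append.mp hB' with h | h
      · exact List.mem_append.mpr (Or.inl ((mem_tops_subtree h).subset _ (lmin_mem B')))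
      · exact List.mem_append.mpr (Or.inr ((mem_tops_subtree h).subset _ (lmin_mem B')))
    omega

theorem exists_max_rk (hL : memL n (node l r)) (t1 t2 : BTree) (hv : valid (node t1 t2))
    (h1 : ∀ B ∈ tops t1 ++ tops t2, B ∈ blocks0 l r) :
    ∃ b ∈ leaves (contrC (rkF l r) t2),
      ∀ i ∈ leaves (contrC (rkF l r) t1) ++ leaves (contrC (rkF l r) t2), i ≤ b := by
  obtain ⟨b0, hb0, hmax⟩ := hv.2.2.2
  obtain ⟨B0, hB0, hb0B⟩ := List.mem_flatMap.mp (by rw [tops_flat]; exact hb0 :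
    b0 ∈ (tops t2).flatMap leaves)
  refine ⟨rkF l r B0, ?_, ?_⟩
  · rw [leaves_contrC]; exact List.mem_map.mpr ⟨B0, hB0, rfl⟩
  · intro i hi
    simp only [leaves_contrC, ← List.map_append, List.mem_map] at hi
    obtain ⟨B', hB', rfl⟩ := hi
    refine rk_mono_max hL (h1 B' hB') (h1 B0 (List.mem_append.mpr (Or.inr hB0))) ?_
    have h2 : b0 ≤ lmax B0 := le_lmax B0 b0 hb0B
    have h3 : lmax B' ≤ b0 := by
      apply hmax
      rcases List.mem_append.mp hB' with h | h
      · exact List.mem_append.mpr (Or.inl ((mem_tops_subtree h).subset _ (lmax_mem B')))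
      · exact List.mem_append.mpr (Or.inr ((mem_tops_subtree h).subset _ (lmax_mem B')))
    omega

theorem valid_contrC (hL : memL n (node l r)) : ∀ t, valid t →
    (∀ B ∈ tops t, B ∈ blocks0 l r) → valid (contrC (rkF l r) t) := by
  intro t
  induction t with
  | leaf i => intro _ _; trivial
  | node t1 t2 ih1 ih2 =>
      intro hv htops
      by_cases hc : connected (node t1 t2)
      · rw [contrC_of_connected _ hc]; trivial
      · simp only [tops, hc, if_false] at htops
        simp only [contrC, hc, if_false]
        exact ⟨ih1 hv.1 (fun B hB => htops B (List.mem_append.mpr (Or.inl hB))),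
          ih2 hv.2.1 (fun B hB => htops B (List.mem_append.mpr (Or.inr hB))),
          exists_min_rk hL t1 t2 hv htops,
          exists_max_rk hL t1 t2 hv htops⟩

theorem valid_pTree (hL : memL n (node l r)) : valid (pTree l r) := by
  refine ⟨valid_contrC hL l hL.2.1 (fun B hB => List.mem_append.mpr (Or.inl hB)),
    valid_contrC hL r hL.2.2.1 (fun B hB => List.mem_append.mpr (Or.inr hB)),
    exists_min_rk hL l r hL.2 (fun B hB => hB),
    exists_max_rk hL l r hL.2 (fun B hB => hB)⟩

end Ctx

end BTree
namespace BTree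

section Ctx

variable {n : ℕ} {l r : BTree}

theorem connected_of_contr (hL : memL n (node l r)) {u : BTree}
    (htops : ∀ B ∈ tops u, B ∈ blocks0 l r)
    (hconn : connected (contrC (rkF l r) u)) : connected u := by
  obtain ⟨c, d, hcd⟩ := hconn
  have hlv : leaves (contrC (rkF l r) u) = (tops u).map (rkF l r) := leaves_contrC _ u
  have hmem : ∀ x, x ∈ Finset.Icc c d ↔ ∃ B ∈ tops u, rkF l r B = x := by
    intro x
    rw [← hcd, List.mem_toFinset, hlv, List.mem_map]
    try exact Iff.rfl
  obtain ⟨B1, hB1⟩ := List.exists_mem_of_ne_nil _ (tops_ne_nil u)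
  have hrkB1 : rkF l r B1 ∈ Finset.Icc c d := (hmem _).mpr ⟨B1, hB1, rfl⟩
  have hcd1 : c ≤ d := by simp only [Finset.mem_Icc] at hrkB1; omega
  have hc1 : 1 ≤ c := by
    obtain ⟨B2, hB2, he⟩ := (hmem c).mp (by simp only [Finset.mem_Icc]; omega)
    have := (rk_le_length (mem_sortedB_iff.mpr (htops B2 hB2))).2; omega
  have hdm : d ≤ (sortedB l r).length := by
    obtain ⟨B3, hB3, he⟩ := (hmem d).mp (by simp only [Finset.mem_Icc]; omega)
    have := (rk_le_length (mem_sortedB_iff.mpr (htops B3 hB3))).1; omega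
  have hK : ((tops u).toFinset.image (fun B => List.idxOf B (sortedB l r))).biUnion
      (fun k => (leaves ((sortedB l r).getD k (leaf 0))).toFinset)
      = (leaves u).toFinset := by
    rw [Finset.image_biUnion]
    rw [← tops_flat u, toFinset_flatMap]
    refine Finset.biUnion_congr rfl ?_
    intro B hB
    rw [sortedB_getD_indexOf (mem_sortedB_iff.mpr (htops B (List.mem_toFinset.mp hB)))]
  have hKIcc : (tops u).toFinset.image (fun B => List.idxOf B (sortedB l r)) =
      Finset.Icc (c-1) (d-1) := by
    ext x
    simp only [Finset.mem_image, Finset.mem_Icc, List.mem_toFinset]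
    constructor
    · rintro ⟨B, hB, rfl⟩
      have h4 : rkF l r B ∈ Finset.Icc c d := (hmem _).mpr ⟨B, hB, rfl⟩
      simp only [Finset.mem_Icc, rkF] at h4
      omega
    · rintro ⟨h5, h6⟩
      obtain ⟨B, hB, he⟩ := (hmem (x+1)).mp (by simp only [Finset.mem_Icc]; omega)
      refine ⟨B, hB, ?_⟩
      simp only [rkF] at he; omega
  have hun := union_consec (sortedB l r) (tiles_sortedB hL) (d-1) (c-1) (by omega) (by omega)
  rw [hKIcc, hun] at hK
  refine ⟨1 + off (sortedB l r) (c-1), off (sortedB l r) (d-1+1), ?_⟩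
  rw [← hK]
  ext x; simp only [Finset.mem_Ico, Finset.mem_Icc]; omega

theorem memP_pTree (hL : memL n (node l r)) : memP (sortedB l r).length (pTree l r) := by
  refine ⟨⟨perm_leaves_pTree hL, valid_pTree hL⟩, ?_⟩
  intro s s1 s2 hsub hnode hne hconn
  rcases hsub with _ | hsub | hsub
  · exact hne rfl
  · obtain ⟨u, hu, rfl, htops⟩ := subtree_contrC_cases _ hsub
    obtain ⟨hnc, u1, u2, rfl⟩ := contrC_node hnode
    exact hnc (connected_of_contr hL
      (fun B hB => List.mem_append.mpr (Or.inl (htops B hB))) hconn)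
  · obtain ⟨u, hu, rfl, htops⟩ := subtree_contrC_cases _ hsub
    obtain ⟨hnc, u1, u2, rfl⟩ := contrC_node hnode
    exact hnc (connected_of_contr hL
      (fun B hB => List.mem_append.mpr (Or.inr (htops B hB))) hconn)

theorem map_numLeaves_BsList : (BsList l r).map numLeaves = (sortedB l r).map numLeaves := by
  simp only [BsList, List.map_map]
  refine List.map_congr_left ?_
  intro B _
  simp [Function.comp, numLeaves_unshift]

theorem off_BsList (k : ℕ) : off (BsList l r) k = off (sortedB l r) k := by
  simp only [off, List.map_take, map_numLeaves_BsList]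

theorem off_indexOf_eq (hL : memL n (node l r)) {B : BTree} (hBm : B ∈ sortedB l r) :
    off (sortedB l r) ((sortedB l r).idxOf B) = lmin B - 1 := by
  have hkl : (sortedB l r).idxOf B < (sortedB l r).length := List.idxOf_lt_length_iff.mpr hBm
  have h := tiles_lmin (sortedB l r) (tiles_sortedB hL) hkl
  rw [sortedB_getD_indexOf hBm] at h
  omega

theorem fsub_block (hL : memL n (node l r)) {B : BTree} (hB : B ∈ blocks0 l r) :
    shift ((((BsList l r).take (rkF l r B - 1)).map numLeaves).sum)
      ((BsList l r).getD (rkF l r B - 1) (leaf 0)) = B := by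
  have hBm : B ∈ sortedB l r := mem_sortedB_iff.mpr hB
  have hkl : (sortedB l r).idxOf B < (sortedB l r).length := List.idxOf_lt_length_iff.mpr hBm
  have h1 : rkF l r B - 1 = (sortedB l r).idxOf B := by simp [rkF]
  rw [h1]
  have h2 : (BsList l r).getD ((sortedB l r).idxOf B) (leaf 0) = unshift (lmin B - 1) B := by
    rw [List.getD_eq_getElem _ _ (by simpa [BsList] using hkl)]
    simp only [BsList, List.getElem_map]
    rw [List.getElem_idxOf hkl]
  have h3 : (((BsList l r).take ((sortedB l r).idxOf B)).map numLeaves).sum =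
      off (BsList l r) ((sortedB l r).idxOf B) := rfl
  rw [h2, h3, off_BsList, off_indexOf_eq hL hBm]
  exact shift_unshift _ B (fun i hi => le_trans (by omega) (lmin_le B i hi))

theorem substitute_eq (hL : memL n (node l r)) :
    node l r = substitute (pTree l r) (BsList l r) := by
  rw [substitute, pTree]
  show node l r = node (graft _ (contrC (rkF l r) l)) (graft _ (contrC (rkF l r) r))
  rw [graft_contrC _ _ l (fun B hB => fsub_block hL (List.mem_append.mpr (Or.inl hB))),
    graft_contrC _ _ r (fun B hB => fsub_block hL (List.mem_append.mpr (Or.inr hB)))]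

theorem memL_BsList (hL : memL n (node l r)) : ∀ B' ∈ BsList l r, memL (numLeaves B') B' := by
  intro B' hB'
  obtain ⟨B, hB, rfl⟩ := List.mem_map.mp hB'
  have hkl : (sortedB l r).idxOf B < (sortedB l r).length := List.idxOf_lt_length_iff.mpr hB
  have hperm := tiles_getD (sortedB l r) 1 (tiles_sortedB hL) _ hkl
  rw [sortedB_getD_indexOf hB] at hperm
  have hoff := off_indexOf_eq hL hB
  have hlm : 1 ≤ lmin B := by
    have := tiles_lmin (sortedB l r) (tiles_sortedB hL) hkl
    rw [sortedB_getD_indexOf hB] at this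
    omega
  constructor
  · rw [numLeaves_unshift, leaves_unshift]
    have h5 := hperm.map (· - (lmin B - 1))
    rw [map_sub_range' (lmin B - 1) (1 + off (sortedB l r) ((sortedB l r).idxOf B))
      (numLeaves B) (by omega)] at h5
    rw [show 1 + off (sortedB l r) ((sortedB l r).idxOf B) - (lmin B - 1) = 1 by omega] at h5
    exact h5
  · exact valid_unshift _ B ((blocks0_subtree (mem_sortedB_iff.mp hB)).valid hL.2)

theorem sum_BsList (hL : memL n (node l r)) : ((BsList l r).map numLeaves).sum = n := by
  rw [map_numLeaves_BsList]
  have h1 : ((sortedB l r).map numLeaves).sum = ((sortedB l r).flatMap leaves).length := by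
    rw [List.length_flatMap]
    exact congrArg List.sum (List.map_congr_left (fun B _ => rfl))
  have h2 : ((sortedB l r).flatMap leaves).Perm (List.range' 1 n) := by
    refine (List.Perm.flatMap_right leaves (List.mergeSort_perm _ _)).trans ?_
    rw [blocks0_flat]; exact hL.1
  rw [h1, h2.length_eq, List.length_range']

theorem numLeaves_A (hL : memL n (node l r)) : numLeaves (node l r) = n := by
  have := hL.1.length_eq
  simpa [numLeaves, List.length_range'] using this

end Ctx

end BTree
namespace BTree

theorem substitute_graft (q : BTree) (Cs : List BTree)
    (hq : ∀ i ∈ leaves q, 1 ≤ i ∧ i ≤ Cs.length) :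
    substitute q Cs = graft (fun i => (shifted Cs).getD (i-1) (leaf 0)) q := by
  rw [substitute]
  refine graft_congr ?_
  intro i hi
  obtain ⟨h1, h2⟩ := hq i hi
  rw [shifted_getD Cs (by omega)]
  rfl

/-- Non-equality of a shifted block with a node of grafts (used for injectivity). -/
theorem graft_ne_node (Cs : List BTree) (hT : Tiles (shifted Cs) 1) {i : ℕ} {u v : BTree}
    (hi : 1 ≤ i ∧ i ≤ Cs.length)
    (hnuv : (leaves (node u v)).Nodup)
    (hb : ∀ j ∈ leaves (node u v), 1 ≤ j ∧ j ≤ Cs.length) :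
    (shifted Cs).getD (i-1) (leaf 0) ≠
      node (graft (fun j => (shifted Cs).getD (j-1) (leaf 0)) u)
           (graft (fun j => (shifted Cs).getD (j-1) (leaf 0)) v) := by
  set D := shifted Cs with hD
  set g := fun j => D.getD (j-1) (leaf 0) with hg
  intro h
  obtain ⟨j1, hj1⟩ := List.exists_mem_of_ne_nil (leaves u) (leaves_ne_nil u)
  obtain ⟨j2, hj2⟩ := List.exists_mem_of_ne_nil (leaves v) (leaves_ne_nil v)
  have hj12 : j1 ≠ j2 := by
    simp only [leaves, List.nodup_append] at hnuv
    intro he; exact hnuv.2.2 j1 hj1 j1 (he ▸ hj2) rfl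
  have key : ∀ j, j ∈ leaves (node u v) → IsSubtree (g j) (g i) → j = i := by
    intro j hj hsub
    obtain ⟨hjb1, hjb2⟩ := hb j hj
    have hjk : j - 1 < D.length := by simp only [hD, length_shifted]; omega
    have hik : i - 1 < D.length := by simp only [hD, length_shifted]; omega
    have he1 : 1 + off D (j-1) ∈ leaves (g j) := by
      have := tiles_getD D 1 hT (j-1) hjk
      refine this.mem_iff.mpr ?_
      rw [List.mem_range'_1]
      have := numLeaves_pos (D.getD (j-1) (leaf 0))
      omega
    have he2 : 1 + off D (j-1) ∈ leaves (g i) := hsub.subset _ he1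
    have h3 := (tiles_getD D 1 hT (i-1) hik).mem_iff.mp he2
    rw [List.mem_range'_1] at h3
    have h4 := off_succ D (i-1) hik
    have h5 : i - 1 = j - 1 := off_locate D hik hjk (by omega) (by omega)
    omega
  have k1 : j1 = i := key j1 (by simp [leaves, hj1]) (by
    have hx : IsSubtree (g j1) (node (graft g u) (graft g v)) := .left (subtree_graft _ hj1)
    rwa [← h] at hx)
  have k2 : j2 = i := key j2 (by simp [leaves, hj2]) (by
    have hx : IsSubtree (g j2) (node (graft g u) (graft g v)) := .right (subtree_graft _ hj2)
    rwa [← h] at hx)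
  exact hj12 (k1.trans k2.symm)

theorem graft_inj (Cs : List BTree) (hT : Tiles (shifted Cs) 1) :
    ∀ q q' : BTree, (leaves q).Nodup → (leaves q').Nodup →
    (∀ i ∈ leaves q, 1 ≤ i ∧ i ≤ Cs.length) → (∀ i ∈ leaves q', 1 ≤ i ∧ i ≤ Cs.length) →
    graft (fun i => (shifted Cs).getD (i-1) (leaf 0)) q =
      graft (fun i => (shifted Cs).getD (i-1) (leaf 0)) q' → q = q' := by
  intro q
  induction q with
  | leaf i =>
      intro q' hn hn' hb hb' h
      cases q' with
      | leaf i' =>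
          simp only [graft] at h
          obtain ⟨h1, h2⟩ := hb i (by simp [leaves])
          obtain ⟨h1', h2'⟩ := hb' i' (by simp [leaves])
          have hik : i - 1 < (shifted Cs).length := by simp only [length_shifted]; omega
          have hik' : i' - 1 < (shifted Cs).length := by simp only [length_shifted]; omega
          have hl1 := tiles_lmin _ hT hik
          have hl2 := tiles_lmin _ hT hik'
          rw [h] at hl1
          have h5 : i - 1 = i' - 1 := by
            refine off_locate _ hik hik' (by omega) ?_
            have := off_lt_succ (shifted Cs) hik
            omega
          congr 1; omega
      | node u v =>
          simp only [graft] at h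
          exact absurd h (graft_ne_node Cs hT (hb i (by simp [leaves])) hn' hb')
  | node a b iha ihb =>
      intro q' hn hn' hb hb' h
      cases q' with
      | leaf i' =>
          simp only [graft] at h
          exact absurd h.symm (graft_ne_node Cs hT (hb' i' (by simp [leaves])) hn hb)
      | node a' b' =>
          simp only [graft, node.injEq] at h
          have hna : (leaves a).Nodup ∧ (leaves b).Nodup := by
            simp only [leaves, List.nodup_append] at hn; exact ⟨hn.1, hn.2.1⟩
          have hna' : (leaves a').Nodup ∧ (leaves b').Nodup := by
            simp only [leaves, List.nodup_append] at hn'; exact ⟨hn'.1, hn'.2.1⟩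
          have e1 := iha a' hna.1 hna'.1
            (fun i hi => hb i (by simp [leaves, hi]))
            (fun i hi => hb' i (by simp [leaves, hi])) h.1
          have e2 := ihb b' hna.2 hna'.2
            (fun i hi => hb i (by simp [leaves, hi]))
            (fun i hi => hb' i (by simp [leaves, hi])) h.2
          rw [e1, e2]

theorem connected_of_graft_connected (Cs : List BTree) (hT : Tiles (shifted Cs) 1)
    {u1 u2 : BTree}
    (hub : ∀ i ∈ leaves (node u1 u2), 1 ≤ i ∧ i ≤ Cs.length)
    (hconn : connected (graft (fun i => (shifted Cs).getD (i-1) (leaf 0)) (node u1 u2))) :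
    connected (node u1 u2) := by
  set D := shifted Cs with hD
  set u := node u1 u2 with hu
  obtain ⟨x, y, hxy⟩ := hconn
  have hlset : ((leaves u).toFinset.image (fun i => i - 1)).biUnion
      (fun k' => (leaves (D.getD k' (leaf 0))).toFinset) = Finset.Icc x y := by
    rw [← hxy, leaves_graft, toFinset_flatMapN, Finset.image_biUnion]
  have hconvex := consec_of_union D hT _ (by
    intro k' hk'
    simp only [Finset.mem_image, List.mem_toFinset] at hk'
    obtain ⟨i, hi, rfl⟩ := hk'
    obtain ⟨h1, h2⟩ := hub i hi
    simp only [hD, length_shifted]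
    omega) hlset
  have hne : (leaves u).toFinset.Nonempty := by
    obtain ⟨j, hj⟩ := List.exists_mem_of_ne_nil (leaves u) (leaves_ne_nil u)
    exact ⟨j, List.mem_toFinset.mpr hj⟩
  set c := (leaves u).toFinset.min' hne with hc
  set d := (leaves u).toFinset.max' hne with hd
  refine ⟨c, d, ?_⟩
  ext z
  simp only [Finset.mem_Icc, List.mem_toFinset]
  constructor
  · intro hz
    exact ⟨Finset.min'_le _ _ (List.mem_toFinset.mpr hz),
      Finset.le_max' _ _ (List.mem_toFinset.mpr hz)⟩
  · rintro ⟨hz1, hz2⟩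
    have hcmem : c ∈ leaves u := List.mem_toFinset.mp (Finset.min'_mem _ hne)
    have hdmem : d ∈ leaves u := List.mem_toFinset.mp (Finset.max'_mem _ hne)
    have hc1 : 1 ≤ c := (hub c hcmem).1
    have hzK := hconvex (c-1) (Finset.mem_image.mpr ⟨c, List.mem_toFinset.mpr hcmem, rfl⟩)
      (d-1) (Finset.mem_image.mpr ⟨d, List.mem_toFinset.mpr hdmem, rfl⟩)
      (z-1) (by omega) (by omega)
    simp only [Finset.mem_image, List.mem_toFinset] at hzK
    obtain ⟨i, hi, he⟩ := hzK
    have := (hub i hi).1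
    have : i = z := by omega
    subst this; exact hi

end BTree
namespace BTree

theorem IsSubtree.node_cases {s l r : BTree} (h : IsSubtree s (node l r)) :
    s = node l r ∨ IsSubtree s l ∨ IsSubtree s r := by
  rcases h with _ | h | h
  · exact Or.inl rfl
  · exact Or.inr (Or.inl h)
  · exact Or.inr (Or.inr h)

theorem lmin_shift (s : ℕ) : ∀ t, lmin (shift s t) = lmin t + s
  | leaf i => rfl
  | node l r => by
      simp only [shift, lmin, lmin_shift s l, lmin_shift s r]
      omega

section Uniq

variable {n : ℕ} {l r : BTree} {q : BTree} {Cs : List BTree}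

theorem block_eq_getD (hL : memL n (node l r)) (hm : 2 ≤ Cs.length)
    (hP : memP Cs.length q) (hC : ∀ C ∈ Cs, memL (numLeaves C) C)
    (hsum : (Cs.map numLeaves).sum = n) (heq : node l r = substitute q Cs)
    {B : BTree} (hB : B ∈ blocks0 l r) {k : ℕ} (hk : k < Cs.length)
    (hDB : IsSubtree ((shifted Cs).getD k (leaf 0)) B) :
    B = (shifted Cs).getD k (leaf 0) := by
  have hT := tiles_shifted Cs (fun C h => (hC C h).1)
  have hqb : ∀ i ∈ leaves q, 1 ≤ i ∧ i ≤ Cs.length := by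
    intro i hi
    have := hP.1.1.mem_iff.mp hi
    rw [List.mem_range'_1] at this
    omega
  have hgq : node l r = graft (fun i => (shifted Cs).getD (i-1) (leaf 0)) q :=
    heq.trans (substitute_graft q Cs hqb)
  have hkD : k < (shifted Cs).length := by rw [length_shifted]; omega
  have hjD : 1 + off (shifted Cs) k ∈ leaves ((shifted Cs).getD k (leaf 0)) := by
    refine (tiles_getD _ 1 hT k hkD).mem_iff.mpr ?_
    rw [List.mem_range'_1]
    have := numLeaves_pos ((shifted Cs).getD k (leaf 0))
    omega
  have hjB : 1 + off (shifted Cs) k ∈ leaves B := hDB.subset _ hjD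
  have hBsub : IsSubtree B (graft (fun i => (shifted Cs).getD (i-1) (leaf 0)) q) := by
    rw [← hgq]; exact blocks0_subtree hB
  rcases subtree_graft_cases _ hBsub with ⟨i, hiq, hBfi⟩ | ⟨u1, u2, huq, hBe⟩
  · obtain ⟨hi1, hi2⟩ := hqb i hiq
    have hBfi' : IsSubtree B ((shifted Cs).getD (i-1) (leaf 0)) := hBfi
    have hiD : i - 1 < (shifted Cs).length := by rw [length_shifted]; omega
    have hjB' : 1 + off (shifted Cs) k ∈ leaves ((shifted Cs).getD (i-1) (leaf 0)) :=
      hBfi'.subset _ hjB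
    have h3 := (tiles_getD _ 1 hT (i-1) hiD).mem_iff.mp hjB'
    rw [List.mem_range'_1] at h3
    have h4 := off_succ (shifted Cs) (i-1) hiD
    have h5 : i - 1 = k := off_locate _ hiD hkD (by omega) (by omega)
    rw [h5] at hBfi'
    exact (hDB.antisymm hBfi').symm
  · exfalso
    have hBconn := blocks0_connected hB
    have hBlt : numLeaves B < n := by
      have hnode : numLeaves (node l r) = numLeaves l + numLeaves r := by
        simp [numLeaves, leaves]
      have hA := numLeaves_A hL
      have hpl := numLeaves_pos l
      have hpr := numLeaves_pos r
      rcases List.mem_append.mp hB with h | h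
      · have h7 : numLeaves B ≤ numLeaves l := by
          rcases (mem_tops_subtree h).eq_or_lt with he | h6
          · rw [he]
          · omega
        omega
      · have h7 : numLeaves B ≤ numLeaves r := by
          rcases (mem_tops_subtree h).eq_or_lt with he | h6
          · rw [he]
          · omega
        omega
    have hne : node u1 u2 ≠ q := by
      intro he
      rw [he, ← hgq] at hBe
      rw [hBe, numLeaves_A hL] at hBlt
      omega
    refine hP.2 (node u1 u2) u1 u2 huq rfl hne ?_
    refine connected_of_graft_connected Cs hT (fun i hi => hqb i (huq.subset _ hi)) ?_
    rw [← hBe]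
    exact hBconn

theorem getD_mem_blocks0 (hL : memL n (node l r)) (hm : 2 ≤ Cs.length)
    (hP : memP Cs.length q) (hC : ∀ C ∈ Cs, memL (numLeaves C) C)
    (hsum : (Cs.map numLeaves).sum = n) (heq : node l r = substitute q Cs) :
    ∀ k, k < Cs.length → (shifted Cs).getD k (leaf 0) ∈ blocks0 l r := by
  intro k hk
  have hT := tiles_shifted Cs (fun C h => (hC C h).1)
  have hqb : ∀ i ∈ leaves q, 1 ≤ i ∧ i ≤ Cs.length := by
    intro i hi
    have := hP.1.1.mem_iff.mp hi
    rw [List.mem_range'_1] at this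
    omega
  have hgq : node l r = graft (fun i => (shifted Cs).getD (i-1) (leaf 0)) q :=
    heq.trans (substitute_graft q Cs hqb)
  have hkD : k < (shifted Cs).length := by rw [length_shifted]; omega
  have hjD : 1 + off (shifted Cs) k ∈ leaves ((shifted Cs).getD k (leaf 0)) := by
    refine (tiles_getD _ 1 hT k hkD).mem_iff.mpr ?_
    rw [List.mem_range'_1]
    have := numLeaves_pos ((shifted Cs).getD k (leaf 0))
    omega
  have hsubA : IsSubtree ((shifted Cs).getD k (leaf 0)) (node l r) := by
    rw [hgq]
    have hmem : k + 1 ∈ leaves q :=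
      hP.1.1.mem_iff.mpr (by rw [List.mem_range'_1]; omega)
    have h2 := subtree_graft (fun i => (shifted Cs).getD (i-1) (leaf 0)) hmem
    exact h2
  have hDlt : numLeaves ((shifted Cs).getD k (leaf 0)) < n := by
    have h3 : (shifted Cs).getD k (leaf 0) = shift (off Cs k) (Cs.getD k (leaf 0)) :=
      shifted_getD Cs hk
    rw [h3, numLeaves_shift]
    have h4 : numLeaves (Cs.getD k (leaf 0)) ∈ Cs.map numLeaves := by
      refine List.mem_map.mpr ⟨Cs.getD k (leaf 0), ?_, rfl⟩
      rw [List.getD_eq_getElem _ _ hk]; exact List.getElem_mem _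
    have h5 := sum_lt_of_two (Cs.map numLeaves) ?_ (by rw [List.length_map]; omega) _ h4
    · rw [hsum] at h5; exact h5
    · intro x hx
      obtain ⟨C, _, rfl⟩ := List.mem_map.mp hx
      exact numLeaves_pos C
  have hDneA : (shifted Cs).getD k (leaf 0) ≠ node l r := by
    intro he
    rw [he, numLeaves_A hL] at hDlt
    omega
  have hconnD : connected ((shifted Cs).getD k (leaf 0)) := tiles_connected _ hT hkD
  rcases hsubA.node_cases with he | hsub | hsub
  · exact absurd he hDneA
  · have hjl : 1 + off (shifted Cs) k ∈ leaves l := hsub.subset _ hjD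
    obtain ⟨B, hBt, hjB⟩ := List.mem_flatMap.mp
      (show 1 + off (shifted Cs) k ∈ (tops l).flatMap leaves by rw [tops_flat]; exact hjl)
    have hnl : (leaves l).Nodup := (IsSubtree.left (IsSubtree.refl l)).nodup hL.nodupA
    have hDB := tops_max hnl hsub hconnD hBt hjD hjB
    have hBb : B ∈ blocks0 l r := List.mem_append.mpr (Or.inl hBt)
    rw [← block_eq_getD hL hm hP hC hsum heq hBb hk hDB]
    exact hBb
  · have hjl : 1 + off (shifted Cs) k ∈ leaves r := hsub.subset _ hjD
    obtain ⟨B, hBt, hjB⟩ := List.mem_flatMap.mp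
      (show 1 + off (shifted Cs) k ∈ (tops r).flatMap leaves by rw [tops_flat]; exact hjl)
    have hnr : (leaves r).Nodup := (IsSubtree.right (IsSubtree.refl r)).nodup hL.nodupA
    have hDB := tops_max hnr hsub hconnD hBt hjD hjB
    have hBb : B ∈ blocks0 l r := List.mem_append.mpr (Or.inr hBt)
    rw [← block_eq_getD hL hm hP hC hsum heq hBb hk hDB]
    exact hBb

theorem shifted_eq_sortedB (hL : memL n (node l r)) (hm : 2 ≤ Cs.length)
    (hP : memP Cs.length q) (hC : ∀ C ∈ Cs, memL (numLeaves C) C)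
    (hsum : (Cs.map numLeaves).sum = n) (heq : node l r = substitute q Cs) :
    shifted Cs = sortedB l r := by
  have hT := tiles_shifted Cs (fun C h => (hC C h).1)
  have hndD : (shifted Cs).Nodup := by
    refine (tiles_pairwise_lmin _ hT).imp ?_
    intro a b h he
    rw [he] at h
    exact absurd h (lt_irrefl _)
  have hndS := sortedB_nodup hL
  have hmm : ∀ B, B ∈ shifted Cs ↔ B ∈ sortedB l r := by
    intro B
    constructor
    · intro hB
      obtain ⟨k, hk, he⟩ := List.mem_iff_getElem.mp hB
      have hk' : k < Cs.length := by rw [length_shifted] at hk; exact hk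
      have h6 := getD_mem_blocks0 hL hm hP hC hsum heq k hk'
      rw [List.getD_eq_getElem _ _ hk, he] at h6
      exact mem_sortedB_iff.mpr h6
    · intro hB
      have hBb := mem_sortedB_iff.mp hB
      have hjA : lmin B ∈ leaves (node l r) := (blocks0_subtree hBb).subset _ (lmin_mem B)
      have hflat : ((shifted Cs).flatMap leaves).Perm (List.range' 1 n) := by
        have h7 := tiles_flat _ 1 hT
        rw [map_numLeaves_shifted, hsum] at h7
        exact h7
      have hj2 : lmin B ∈ (shifted Cs).flatMap leaves :=
        hflat.mem_iff.mpr (hL.1.mem_iff.mp hjA)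
      obtain ⟨D', hD'm, hjD'⟩ := List.mem_flatMap.mp hj2
      obtain ⟨k, hk, he⟩ := List.mem_iff_getElem.mp hD'm
      have hk' : k < Cs.length := by rwa [length_shifted] at hk
      have hDb := getD_mem_blocks0 hL hm hP hC hsum heq k hk'
      rw [List.getD_eq_getElem _ _ hk, he] at hDb
      have h8 : B = D' := blocks0_eq_of_shared hL hBb hDb (lmin_mem B) hjD'
      rw [h8]; exact hD'm
  haveI : IsAntisymm BTree (fun B B' => lmin B < lmin B') :=
    ⟨fun a b h1 h2 => absurd h2 (by omega)⟩
  exact List.Perm.eq_of_pairwise (fun a b _ _ h1 h2 => absurd h2 (by omega))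
    (tiles_pairwise_lmin _ hT) (sortedB_pairwise_lt hL) ((List.perm_ext_iff_of_nodup hndD hndS).mpr hmm)

theorem Cs_eq_BsList (hL : memL n (node l r)) (hm : 2 ≤ Cs.length)
    (hP : memP Cs.length q) (hC : ∀ C ∈ Cs, memL (numLeaves C) C)
    (hsum : (Cs.map numLeaves).sum = n) (heq : node l r = substitute q Cs) :
    Cs = BsList l r := by
  have hT := tiles_shifted Cs (fun C h => (hC C h).1)
  have heqD := shifted_eq_sortedB hL hm hP hC hsum heq
  have hlen : Cs.length = (BsList l r).length := by
    rw [BsList, List.length_map, ← heqD, length_shifted]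
  refine List.ext_getElem hlen ?_
  intro k h1 h2
  have hkS : k < (sortedB l r).length := by rwa [BsList, List.length_map] at h2
  have e1 : (BsList l r)[k]'h2 = unshift (lmin ((sortedB l r)[k]'hkS) - 1)
      ((sortedB l r)[k]'hkS) := by
    simp [BsList]
  have hkD : k < (shifted Cs).length := by rw [length_shifted]; exact h1
  have e2 : (sortedB l r)[k]'hkS = shift (off Cs k) (Cs[k]'h1) := by
    have h4 := shifted_getD Cs h1
    rw [List.getD_eq_getElem _ _ h1, List.getD_eq_getElem _ _ hkD] at h4
    exact (List.getElem_of_eq heqD.symm hkS).trans h4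
  have e3 : lmin ((sortedB l r)[k]'hkS) = 1 + off Cs k := by
    rw [e2, lmin_shift]
    have hCk : Cs[k]'h1 ∈ Cs := List.getElem_mem _
    have := lmin_of_perm_range' (numLeaves_pos _) (hC _ hCk).1
    omega
  rw [e1, e3, e2, show 1 + off Cs k - 1 = off Cs k from by omega, unshift_shift]

theorem length_BsList : (BsList l r).length = (sortedB l r).length := by
  rw [BsList, List.length_map]

theorem q_eq_pTree (hL : memL n (node l r)) (hm : 2 ≤ Cs.length)
    (hP : memP Cs.length q) (hC : ∀ C ∈ Cs, memL (numLeaves C) C)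
    (hsum : (Cs.map numLeaves).sum = n) (heq : node l r = substitute q Cs) :
    q = pTree l r := by
  have hCs := Cs_eq_BsList hL hm hP hC hsum heq
  subst hCs
  have hT := tiles_shifted (BsList l r) (fun C h => (memL_BsList hL C h).1)
  have hqb : ∀ i ∈ leaves q, 1 ≤ i ∧ i ≤ (BsList l r).length := by
    intro i hi
    have := hP.1.1.mem_iff.mp hi
    rw [List.mem_range'_1] at this
    omega
  have hpb : ∀ i ∈ leaves (pTree l r), 1 ≤ i ∧ i ≤ (BsList l r).length := by
    intro i hi
    have := (perm_leaves_pTree hL).mem_iff.mp hi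
    rw [List.mem_range'_1, ← length_BsList] at this
    omega
  have hgq : node l r = graft (fun i => (shifted (BsList l r)).getD (i-1) (leaf 0)) q :=
    heq.trans (substitute_graft q (BsList l r) hqb)
  have hgp : node l r = graft (fun i => (shifted (BsList l r)).getD (i-1) (leaf 0)) (pTree l r) := by
    rw [substitute_eq hL]
    exact substitute_graft (pTree l r) (BsList l r) hpb
  refine graft_inj (BsList l r) hT q (pTree l r)
    (hP.1.1.nodup_iff.mpr List.nodup_range')
    ((perm_leaves_pTree hL).nodup_iff.mpr List.nodup_range')
    hqb hpb ?_
  rw [← hgq, ← hgp]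

end Uniq

end BTree
/-- Every `A ∈ L(n)` with `n ≥ 2` can be written in exactly one way as a
substitution `A = p(B_1, …, B_m)` with `m ≥ 2`, `p ∈ P(m)` prime, and each
`B_i ∈ L(n_i)` where `n_1 + ⋯ + n_m = n`. -/
theorem existsUnique_prime_decomposition (n : ℕ) (hn : 2 ≤ n)
    (A : BTree) (hA : BTree.memL n A) :
    ∃! pB : BTree × List BTree,
      2 ≤ pB.2.length ∧
      BTree.memP pB.2.length pB.1 ∧
      (∀ B ∈ pB.2, BTree.memL (BTree.numLeaves B) B) ∧
      (pB.2.map BTree.numLeaves).sum = n ∧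
      A = BTree.substitute pB.1 pB.2 := by
  cases A with
  | leaf i =>
      exfalso
      have h1 := hA.1.length_eq
      simp only [BTree.leaves, List.length_cons, List.length_nil, List.length_range'] at h1
      omega
  | node l r =>
      refine ⟨(BTree.pTree l r, BTree.BsList l r), ⟨?_, ?_, ?_, ?_, ?_⟩, ?_⟩
      · show 2 ≤ (BTree.BsList l r).length
        rw [BTree.length_BsList]
        exact BTree.two_le_length_sortedB
      · show BTree.memP (BTree.BsList l r).length (BTree.pTree l r)
        rw [BTree.length_BsList]
        exact BTree.memP_pTree hA
      · exact BTree.memL_BsList hA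
      · exact BTree.sum_BsList hA
      · exact BTree.substitute_eq hA
      · rintro ⟨q, Cs⟩ ⟨hm, hP, hC, hsum, heq⟩
        have h1 : Cs = BTree.BsList l r := BTree.Cs_eq_BsList hA hm hP hC hsum heq
        have h2 : q = BTree.pTree l r := BTree.q_eq_pTree hA hm hP hC hsum heq
        rw [Prod.mk.injEq]
        exact ⟨h2, h1⟩
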